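/- Let f_{1,∞} be a commutative, finitely generated family of continuous surjections on a compact metric space X with more than one point. If (X, f_{1,∞}) is weakly mixing, then it is thickly sensitive: there exists δ > 0 such that for every non-empty open U ⊆ X, the set N(U, δ) = {n : ∃ x, y ∈ U with d(f_1^n(x), f_1^n(y)) > δ} contains arbitrarily long runs of consecutive integers. -/

import Mathlib

open Set Filter MeasureTheory TopologicalSpace

/-- `iterN f n = f_{n-1} ∘ ⋯ ∘ f_0`, the `n`-th iterate of the non-autonomous system. -/
def iterN {X : Type*} (f : ℕ → X → X) : ℕ → X → X
  | 0 => id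
  | n + 1 => f n ∘ iterN f n

/-- Topological transitivity of a non-autonomous system. -/
def NATransitive {X : Type*} [TopologicalSpace X] (f : ℕ → X → X) : Prop :=
  ∀ U V : Set X, IsOpen U → IsOpen V → U.Nonempty → V.Nonempty →
    ∃ n : ℕ, 0 < n ∧ (iterN f n '' U ∩ V).Nonempty

/-- Weak mixing (order 2). -/
def NAWeaklyMixing {X : Type*} [TopologicalSpace X] (f : ℕ → X → X) : Prop :=
  ∀ U₁ U₂ V₁ V₂ : Set X, IsOpen U₁ → IsOpen U₂ → IsOpen V₁ → IsOpen V₂ →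
    U₁.Nonempty → U₂.Nonempty → V₁.Nonempty → V₂.Nonempty →
    ∃ n : ℕ, 0 < n ∧ (iterN f n '' U₁ ∩ V₁).Nonempty ∧ (iterN f n '' U₂ ∩ V₂).Nonempty

/-- Weak mixing of order `m`. -/
def NAWeaklyMixingOrder {X : Type*} [TopologicalSpace X] (f : ℕ → X → X) (m : ℕ) : Prop :=
  ∀ U V : Fin m → Set X, (∀ i, IsOpen (U i)) → (∀ i, IsOpen (V i)) →
    (∀ i, (U i).Nonempty) → (∀ i, (V i).Nonempty) →
    ∃ n : ℕ, 0 < n ∧ ∀ i, (iterN f n '' U i ∩ V i).Nonempty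

/-- Banks's condition. -/
def NABanks {X : Type*} [TopologicalSpace X] (f : ℕ → X → X) : Prop :=
  ∀ U V W : Set X, IsOpen U → IsOpen V → IsOpen W →
    U.Nonempty → V.Nonempty → W.Nonempty →
    ∃ n : ℕ, 0 < n ∧ (iterN f n '' U ∩ V).Nonempty ∧ (iterN f n '' U ∩ W).Nonempty

/-- Topological mixing. -/
def NAMixing {X : Type*} [TopologicalSpace X] (f : ℕ → X → X) : Prop :=
  ∀ U V : Set X, IsOpen U → IsOpen V → U.Nonempty → V.Nonempty →
    ∃ N : ℕ, ∀ n ≥ N, (iterN f n '' U ∩ V).Nonempty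

/-- `blockC f s k = f_{s+k-1} ∘ ⋯ ∘ f_s`. -/
def blockC {X : Type*} (f : ℕ → X → X) (s k : ℕ) : X → X :=
  iterN (fun i => f (s + i)) k

/-- The `k`-th iterate system `f_{1,∞}^{[k]}`. -/
def kthSys {X : Type*} (f : ℕ → X → X) (k : ℕ) : ℕ → X → X :=
  fun n => blockC f (n * k) k

/-- The induced non-autonomous system on Borel probability measures (pushforwards). -/
noncomputable def inducedM {X : Type*} [MeasurableSpace X] [TopologicalSpace X]
    [BorelSpace X] (f : ℕ → X → X) (hf : ∀ n, Continuous (f n)) :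
    ℕ → ProbabilityMeasure X → ProbabilityMeasure X :=
  fun n μ => μ.map ((hf n).measurable.aemeasurable)

/-- The induced non-autonomous system on the hyperspace of non-empty compact subsets. -/
def inducedK {X : Type*} [TopologicalSpace X] (f : ℕ → X → X) (hf : ∀ n, Continuous (f n)) :
    ℕ → NonemptyCompacts X → NonemptyCompacts X :=
  fun n K => ⟨⟨f n '' (K : Set X), K.isCompact.image (hf n)⟩, K.nonempty.image _⟩

/-- The set `N(U, δ)` of sensitivity times. -/
def NSet {X : Type*} [PseudoMetricSpace X] (f : ℕ → X → X) (U : Set X) (δ : ℝ) : Set ℕ :=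
  {n | 0 < n ∧ ∃ x ∈ U, ∃ y ∈ U, δ < dist (iterN f n x) (iterN f n y)}

/-- Sensitive dependence on initial conditions. -/
def NASensitive {X : Type*} [PseudoMetricSpace X] (f : ℕ → X → X) : Prop :=
  ∃ δ : ℝ, 0 < δ ∧ ∀ x : X, ∀ U : Set X, IsOpen U → x ∈ U →
    ∃ y ∈ U, ∃ n : ℕ, 0 < n ∧ δ < dist (iterN f n x) (iterN f n y)

/-- A thick subset of ℕ. -/
def ThickSet (S : Set ℕ) : Prop := ∀ p : ℕ, ∃ n : ℕ, ∀ j ≤ p, n + j ∈ S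

/-- A syndetic subset of ℕ. -/
def SyndeticSet (S : Set ℕ) : Prop := ∃ a : ℕ, ∀ i : ℕ, ∃ j, i ≤ j ∧ j ≤ i + a ∧ j ∈ S

/-- Upper density of a subset of ℕ. -/
noncomputable def upperDens (S : Set ℕ) : ℝ :=
  Filter.limsup (fun n : ℕ => (Nat.card ↥(S ∩ Set.Iio n) : ℝ) / n) Filter.atTop

/-- Periodic point of a non-autonomous system. -/
def NAPeriodicPt {X : Type*} (f : ℕ → X → X) (x : X) : Prop :=
  ∃ n : ℕ, 0 < n ∧ ∀ k : ℕ, 0 < k → iterN f (n * k) x = x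


section ThickAux

variable {X : Type*}

lemma iterN_congrAux (u v : ℕ → X → X) (j : ℕ) (h : ∀ i < j, u i = v i) :
    iterN u j = iterN v j := by
  induction j with
  | zero => rfl
  | succ j ih =>
      show u j ∘ iterN u j = v j ∘ iterN v j
      rw [h j (Nat.lt_succ_self _), ih (fun i hi => h i (Nat.lt_succ_of_lt hi))]

lemma iterN_add_applyAux (f : ℕ → X → X) (n k : ℕ) (x : X) :
    iterN f (n + k) x = blockC f n k (iterN f n x) := by
  induction k with
  | zero => rfl
  | succ k ih =>
      show f (n + k) (iterN f (n + k) x) = f (n + k) (blockC f n k (iterN f n x))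
      rw [ih]

lemma iterN_continuousAux [TopologicalSpace X] (f : ℕ → X → X)
    (hf : ∀ n, Continuous (f n)) (n : ℕ) : Continuous (iterN f n) := by
  induction n with
  | zero => exact continuous_id
  | succ n ih => exact (hf n).comp ih

lemma iterN_surjectiveAux (f : ℕ → X → X)
    (hf : ∀ n, Function.Surjective (f n)) (n : ℕ) : Function.Surjective (iterN f n) := by
  induction n with
  | zero => exact Function.surjective_id
  | succ n ih => exact (hf n).comp ih

lemma f_iterN_commAux (f : ℕ → X → X) (hc : ∀ i j, f i ∘ f j = f j ∘ f i) (i n : ℕ)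
    (x : X) : f i (iterN f n x) = iterN f n (f i x) := by
  induction n generalizing x with
  | zero => rfl
  | succ n ih =>
      show f i (f n (iterN f n x)) = f n (iterN f n (f i x))
      have h1 : f i (f n (iterN f n x)) = f n (f i (iterN f n x)) := congrFun (hc i n) _
      rw [h1, ih x]

lemma iterN_commAux (f : ℕ → X → X) (hc : ∀ i j, f i ∘ f j = f j ∘ f i) (k n : ℕ)
    (x : X) : iterN f k (iterN f n x) = iterN f n (iterN f k x) := by
  induction k generalizing x with
  | zero => rfl
  | succ k ih =>
      show f k (iterN f k (iterN f n x)) = iterN f n (f k (iterN f k x))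
      rw [ih, f_iterN_commAux f hc]

lemma wm_listAux [TopologicalSpace X] [Nonempty X] (f : ℕ → X → X)
    (hf : ∀ n, Continuous (f n)) (hc : ∀ i j, f i ∘ f j = f j ∘ f i)
    (h : NAWeaklyMixing f) :
    ∀ L : List (Set X × Set X),
      (∀ q ∈ L, IsOpen q.1 ∧ IsOpen q.2 ∧ q.1.Nonempty ∧ q.2.Nonempty) →
      ∃ n, 0 < n ∧ ∀ q ∈ L, ∃ x ∈ q.1, iterN f n x ∈ q.2 := by
  have key : ∀ m : ℕ, ∀ L : List (Set X × Set X), L.length = m →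
      (∀ q ∈ L, IsOpen q.1 ∧ IsOpen q.2 ∧ q.1.Nonempty ∧ q.2.Nonempty) →
      ∃ n, 0 < n ∧ ∀ q ∈ L, ∃ x ∈ q.1, iterN f n x ∈ q.2 := by
    intro m
    induction m using Nat.strong_induction_on with
    | _ m ih =>
      intro L hlen hL
      match L, hlen with
      | [], _ =>
          obtain ⟨n, hn, _⟩ := h univ univ univ univ isOpen_univ isOpen_univ
            isOpen_univ isOpen_univ univ_nonempty univ_nonempty univ_nonempty univ_nonempty
          exact ⟨n, hn, by simp⟩
      | [q], _ =>
          obtain ⟨hq1, hq2, hq3, hq4⟩ := hL q (by simp)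
          obtain ⟨n, hn, h1, _⟩ := h q.1 q.1 q.2 q.2 hq1 hq1 hq2 hq2 hq3 hq3 hq4 hq4
          obtain ⟨y, ⟨x, hx, rfl⟩, hy⟩ := h1
          exact ⟨n, hn, by rintro q' hq'; simp at hq'; subst hq'; exact ⟨x, hx, hy⟩⟩
      | q1 :: q2 :: L'', hlen =>
          obtain ⟨hq11, hq12, hq13, hq14⟩ := hL q1 (by simp)
          obtain ⟨hq21, hq22, hq23, hq24⟩ := hL q2 (by simp)
          obtain ⟨n, hn, h1, h2⟩ := h q1.1 q1.2 q2.1 q2.2 hq11 hq12 hq21 hq22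
            hq13 hq14 hq23 hq24
          set A := q1.1 ∩ (iterN f n) ⁻¹' q2.1 with hA
          set Bs := q1.2 ∩ (iterN f n) ⁻¹' q2.2 with hBs
          have hcont : Continuous (iterN f n) := iterN_continuousAux f hf n
          have hAo : IsOpen A := hq11.inter (hq21.preimage hcont)
          have hBo : IsOpen Bs := hq12.inter (hq22.preimage hcont)
          have hAne : A.Nonempty := by
            obtain ⟨y, ⟨x, hx, rfl⟩, hy⟩ := h1
            exact ⟨x, hx, hy⟩
          have hBne : Bs.Nonempty := by
            obtain ⟨y, ⟨x, hx, rfl⟩, hy⟩ := h2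
            exact ⟨x, hx, hy⟩
          have hlen' : ((A, Bs) :: L'').length = m - 1 := by
            simp at hlen ⊢; omega
          have hm1 : m - 1 < m := by simp at hlen; omega
          obtain ⟨k, hk, hkP⟩ := ih (m - 1) hm1 ((A, Bs) :: L'') hlen' (by
            rintro q hq
            rcases List.mem_cons.1 hq with rfl | hq
            · exact ⟨hAo, hBo, hAne, hBne⟩
            · exact hL q (by simp [hq]))
          refine ⟨k, hk, ?_⟩
          intro q hq
          rcases List.mem_cons.1 hq with rfl | hq
          · obtain ⟨x, hxA, hxB⟩ := hkP (A, Bs) (by simp)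
            exact ⟨x, hxA.1, hxB.1⟩
          rcases List.mem_cons.1 hq with rfl | hq
          · obtain ⟨x, hxA, hxB⟩ := hkP (A, Bs) (by simp)
            refine ⟨iterN f n x, hxA.2, ?_⟩
            have : iterN f k (iterN f n x) = iterN f n (iterN f k x) :=
              iterN_commAux f hc k n x
            rw [this]
            exact hxB.2
          · exact hkP q (by simp [hq])
  intro L hL
  exact key L.length L rfl hL

end ThickAux

/-- a commutative, finitely generated, surjective, weakly mixing
non-autonomous system on a compact metric space with more than one point is
thickly sensitive. -/
theorem finitely_generated_weaklyMixing_thickly_sensitive {X : Type*} [MetricSpace X]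
    [CompactSpace X] [Nontrivial X] (f : ℕ → X → X) (hf : ∀ n, Continuous (f n))
    (hc : ∀ i j, f i ∘ f j = f j ∘ f i)
    (hfin : ∃ S : Set (X → X), S.Finite ∧ ∀ n, f n ∈ S)
    (hsurj : ∀ n, Function.Surjective (f n)) (h : NAWeaklyMixing f) :
    ∃ δ : ℝ, 0 < δ ∧ ∀ U : Set X, IsOpen U → U.Nonempty → ThickSet (NSet f U δ) := by
  classical
  obtain ⟨a, b, hab⟩ := exists_pair_ne X
  have hD : 0 < dist a b := dist_pos.2 hab
  set d4 : ℝ := dist a b / 4 with hd4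
  refine ⟨d4, by positivity, ?_⟩
  intro U hU hUne p
  obtain ⟨S, hSfin, hS⟩ := hfin
  set T : Set (Fin p → (X → X)) := Set.range (fun n i => f (n + (i : ℕ))) with hT
  have hTfin : T.Finite := by
    apply Set.Finite.subset (Set.Finite.pi (fun _ : Fin p => hSfin))
    rintro _ ⟨n, rfl⟩
    intro i _
    exact hS _
  set ψ : (Fin p → (X → X)) × Fin (p + 1) → (X → X) :=
    fun q => iterN (fun i => if h : i < p then q.1 ⟨i, h⟩ else id) (q.2 : ℕ) with hψ
  set B : Set (X → X) := {g | ∃ n j, j ≤ p ∧ g = blockC f n j} with hB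
  have hBsub : B ⊆ ψ '' (T ×ˢ (Set.univ : Set (Fin (p + 1)))) := by
    rintro g ⟨n, j, hj, rfl⟩
    refine ⟨⟨fun i => f (n + (i : ℕ)), ⟨j, Nat.lt_succ_of_le hj⟩⟩, ⟨⟨n, rfl⟩, trivial⟩, ?_⟩
    show iterN (fun i => if h : i < p then f (n + i) else id) j = blockC f n j
    exact iterN_congrAux _ _ j (fun i hi => by rw [dif_pos (lt_of_lt_of_le hi hj)])
  have hBfin : B.Finite := ((hTfin.prod Set.finite_univ).image ψ).subset hBsub
  set L : List (Set X × Set X) :=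
    hBfin.toFinset.toList.flatMap
      (fun g => [(U, g ⁻¹' Metric.ball a d4), (U, g ⁻¹' Metric.ball b d4)]) with hL
  have hgprop : ∀ g ∈ hBfin.toFinset, Continuous g ∧ Function.Surjective g := by
    intro g hg
    rw [Set.Finite.mem_toFinset] at hg
    obtain ⟨n, j, hj, rfl⟩ := hg
    exact ⟨iterN_continuousAux _ (fun i => hf _) j,
      iterN_surjectiveAux _ (fun i => hsurj _) j⟩
  have hLprop : ∀ q ∈ L, IsOpen q.1 ∧ IsOpen q.2 ∧ q.1.Nonempty ∧ q.2.Nonempty := by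
    intro q hq
    rw [hL, List.mem_flatMap] at hq
    obtain ⟨g, hg, hq⟩ := hq
    rw [Finset.mem_toList] at hg
    obtain ⟨hgc, hgs⟩ := hgprop g hg
    have hball : ∀ c : X, IsOpen (g ⁻¹' Metric.ball c d4) ∧ (g ⁻¹' Metric.ball c d4).Nonempty := by
      intro c
      refine ⟨Metric.isOpen_ball.preimage hgc, ?_⟩
      obtain ⟨x, hx⟩ := hgs c
      exact ⟨x, by simp [hx, Metric.mem_ball]; positivity⟩
    simp only [List.mem_cons, List.mem_singleton] at hq
    rcases hq with rfl | rfl | hq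
    · exact ⟨hU, (hball a).1, hUne, (hball a).2⟩
    · exact ⟨hU, (hball b).1, hUne, (hball b).2⟩
    · exact absurd hq List.not_mem_nil
  obtain ⟨n, hn, hnL⟩ := wm_listAux f hf hc h L hLprop
  refine ⟨n, ?_⟩
  intro j hj
  have hgB : blockC f n j ∈ hBfin.toFinset := by
    rw [Set.Finite.mem_toFinset]
    exact ⟨n, j, hj, rfl⟩
  have hmem : ∀ q ∈ [(U, (blockC f n j) ⁻¹' Metric.ball a d4),
      (U, (blockC f n j) ⁻¹' Metric.ball b d4)], q ∈ L := by
    intro q hq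
    rw [hL, List.mem_flatMap]
    exact ⟨blockC f n j, Finset.mem_toList.2 hgB, hq⟩
  obtain ⟨x, hxU, hxa⟩ := hnL (U, (blockC f n j) ⁻¹' Metric.ball a d4) (hmem _ (by simp))
  obtain ⟨y, hyU, hyb⟩ := hnL (U, (blockC f n j) ⁻¹' Metric.ball b d4) (hmem _ (by simp))
  refine ⟨by omega, x, hxU, y, hyU, ?_⟩
  rw [iterN_add_applyAux, iterN_add_applyAux]
  set u := blockC f n j (iterN f n x)
  set v := blockC f n j (iterN f n y)
  have hu : dist u a < d4 := by simpa [Metric.mem_ball] using hxa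
  have hv : dist v b < d4 := by simpa [Metric.mem_ball] using hyb
  have h4 : dist a b ≤ dist a u + dist u v + dist v b := dist_triangle4 a u v b
  have : dist a u = dist u a := dist_comm a u
  rw [hd4] at *
  linarith
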